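/- Suppose h_e = 0 for all e ∈ E and the nonnegative matrix M with M_{e,f} = c_{e,f}·tanh(β_{e,f}) has spectral radius ρ(M) < 1. Then the zero vector is the unique fixed point of the BP map Φ(z)_e = Σ_f c_{e,f} F_{β_{e,f}}(z_f), and Φ^s(z₀) → 0 for every initialization z₀ ∈ ℝ^E. -/

import Mathlib

noncomputable def artanh (x : ℝ) : ℝ := Real.log ((1 + x) / (1 - x)) / 2

noncomputable def F (β x : ℝ) : ℝ := artanh (Real.tanh β * Real.tanh x)

/-- The zero-field BP map `Φ(z)_e = Σ_f c_{e,f} F_{β_{e,f}}(z_f)`. -/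
noncomputable def BPmap0 {E : Type*} [Fintype E] (c β : E → E → ℝ)
    (z : E → ℝ) : E → ℝ :=
  fun e => ∑ f, c e f * F (β e f) (z f)


lemma tanh_lt_one (x : ℝ) : Real.tanh x < 1 := by
  rw [Real.tanh_eq_sinh_div_cosh, div_lt_one (Real.cosh_pos x)]
  nlinarith [Real.cosh_sub_sinh x, Real.exp_pos (-x)]

lemma neg_one_lt_tanh (x : ℝ) : -1 < Real.tanh x := by
  rw [Real.tanh_eq_sinh_div_cosh, lt_div_iff₀ (Real.cosh_pos x)]
  nlinarith [Real.cosh_add_sinh x, Real.exp_pos x]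

lemma tanh_nonneg {x : ℝ} (hx : 0 ≤ x) : 0 ≤ Real.tanh x := by
  rw [Real.tanh_eq_sinh_div_cosh]
  exact div_nonneg (by simpa using Real.sinh_le_sinh.2 hx) (Real.cosh_pos x).le

lemma artanh_zero : artanh 0 = 0 := by simp [artanh]

lemma artanh_tanh (x : ℝ) : artanh (Real.tanh x) = x := by
  have h1 : 1 + Real.tanh x = Real.exp x / Real.cosh x := by
    rw [Real.tanh_eq_sinh_div_cosh, ← Real.cosh_add_sinh]
    field_simp
  have h2 : 1 - Real.tanh x = Real.exp (-x) / Real.cosh x := by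
    rw [Real.tanh_eq_sinh_div_cosh, ← Real.cosh_sub_sinh]
    field_simp
  have h3 : Real.exp x / Real.cosh x / (Real.exp (-x) / Real.cosh x) = Real.exp (2*x) := by
    have hc := (Real.cosh_pos x).ne'
    have he := (Real.exp_pos (-x)).ne'
    field_simp
    rw [← Real.exp_add]
    ring_nf
  rw [artanh, h1, h2, h3, Real.log_exp]
  ring

lemma artanh_le_artanh {a b : ℝ} (ha : -1 < a) (hab : a ≤ b) (hb : b < 1) :
    artanh a ≤ artanh b := by
  have h1 : (0:ℝ) < 1 - b := by linarith
  have h2 : (0:ℝ) < 1 + a := by linarith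
  have h3 : (0:ℝ) < 1 + b := by linarith
  have h4 : (0:ℝ) < 1 - a := by linarith
  have : (1 + a) / (1 - a) ≤ (1 + b) / (1 - b) := by
    rw [div_le_div_iff₀ h4 h1]; nlinarith
  exact div_le_div_of_nonneg_right
    (Real.log_le_log (div_pos h2 h4) this) (by norm_num)

lemma hasDerivAt_tanh (x : ℝ) : HasDerivAt Real.tanh (1 / Real.cosh x ^ 2) x := by
  have h := (Real.hasDerivAt_sinh x).div (Real.hasDerivAt_cosh x) (Real.cosh_pos x).ne'
  have hfun : (fun y => Real.sinh y / Real.cosh y) = Real.tanh := by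
    funext y; rw [Real.tanh_eq_sinh_div_cosh]
  rw [show (Real.sinh / Real.cosh) = fun y => Real.sinh y / Real.cosh y from rfl, hfun] at h
  refine h.congr_deriv ?_
  have := Real.cosh_sq_sub_sinh_sq x
  rw [div_left_inj' (pow_ne_zero 2 (Real.cosh_pos x).ne')]
  nlinarith

lemma mul_tanh_le {t x : ℝ} (ht0 : 0 ≤ t) (ht1 : t ≤ 1) (hx : 0 ≤ x) :
    t * Real.tanh x ≤ Real.tanh (t * x) := by
  set g : ℝ → ℝ := fun y => Real.tanh (t * y) - t * Real.tanh y with hg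
  have hderiv : ∀ y : ℝ, HasDerivAt g (t * (1 / Real.cosh (t * y) ^ 2) - t * (1 / Real.cosh y ^ 2)) y := by
    intro y
    exact (((hasDerivAt_tanh (t * y)).comp y ((hasDerivAt_id y).const_mul t)).sub
      ((hasDerivAt_tanh y).const_mul t)).congr_deriv (by ring)
  have hmono : MonotoneOn g (Set.Ici (0:ℝ)) := by
    apply monotoneOn_of_deriv_nonneg (convex_Ici 0)
    · exact fun y _ => ((hderiv y).differentiableAt).continuousAt.continuousWithinAt
    · intro y hy
      exact ((hderiv y).differentiableAt).differentiableWithinAt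
    · intro y hy
      rw [(hderiv y).deriv]
      have hy0 : 0 ≤ y := le_of_lt (by simpa using hy)
      have hcc : Real.cosh (t * y) ≤ Real.cosh y := by
        rw [Real.cosh_le_cosh]
        rw [abs_of_nonneg (mul_nonneg ht0 hy0), abs_of_nonneg hy0]
        nlinarith
      have h1 : (0:ℝ) < Real.cosh (t * y) := Real.cosh_pos _
      have h2 : (0:ℝ) < Real.cosh y := Real.cosh_pos _
      have : 1 / Real.cosh y ^ 2 ≤ 1 / Real.cosh (t * y) ^ 2 := by
        apply one_div_le_one_div_of_le (by positivity)
        nlinarith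
      nlinarith
  have := hmono (Set.self_mem_Ici) (Set.mem_Ici.2 hx) hx
  simp [hg, Real.tanh_zero] at this
  linarith

lemma artanh_neg {y : ℝ} (h1 : -1 < y) (h2 : y < 1) : artanh (-y) = -artanh y := by
  rw [artanh, artanh, ← neg_div, ← Real.log_inv]
  congr 2
  rw [eq_comm, inv_eq_iff_eq_inv, inv_div]
  ring_nf

lemma abs_tanh_lt_one (x : ℝ) : |Real.tanh x| < 1 :=
  abs_lt.2 ⟨neg_one_lt_tanh x, tanh_lt_one x⟩

lemma abs_F_le {β : ℝ} (hβ : 0 ≤ β) (x : ℝ) : |F β x| ≤ Real.tanh β * |x| := by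
  set t := Real.tanh β with ht
  have ht0 : 0 ≤ t := tanh_nonneg hβ
  have ht1 : t < 1 := tanh_lt_one β
  -- main bound for nonneg x
  have key : ∀ y : ℝ, 0 ≤ y → |F β y| ≤ t * y := by
    intro y hy
    have hty0 : 0 ≤ t * Real.tanh y := mul_nonneg ht0 (tanh_nonneg hy)
    have htylt : t * Real.tanh y < 1 := by
      calc t * Real.tanh y ≤ 1 * Real.tanh y := by
            apply mul_le_mul_of_nonneg_right ht1.le (tanh_nonneg hy)
        _ < 1 := by simpa using tanh_lt_one y
    have hFnn : 0 ≤ F β y := by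
      rw [F, ← artanh_zero]
      exact artanh_le_artanh (by norm_num) hty0 htylt
    have hFle : F β y ≤ t * y := by
      have h1 : t * Real.tanh y ≤ Real.tanh (t * y) := mul_tanh_le ht0 ht1.le hy
      calc F β y ≤ artanh (Real.tanh (t * y)) := by
            exact artanh_le_artanh (by linarith) h1 (tanh_lt_one _)
        _ = t * y := artanh_tanh _
    rw [abs_of_nonneg hFnn]; exact hFle
  rcases le_or_gt 0 x with hx | hx
  · rw [abs_of_nonneg hx]; exact key x hx
  · have hx' : 0 ≤ -x := by linarith
    have hFneg : F β x = -F β (-x) := by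
      have habs : |Real.tanh β * Real.tanh x| < 1 := by
        rw [abs_mul]
        nlinarith [abs_tanh_lt_one β, abs_tanh_lt_one x,
          abs_nonneg (Real.tanh β), abs_nonneg (Real.tanh x)]
      obtain ⟨hl, hr⟩ := abs_lt.1 habs
      rw [F, F, Real.tanh_neg, mul_neg, artanh_neg hl hr, neg_neg]
    rw [hFneg, abs_neg, abs_of_neg hx]
    exact key (-x) hx'

lemma F_zero (β : ℝ) : F β 0 = 0 := by simp [F, Real.tanh_zero, artanh_zero]

section MatrixPart

variable {E : Type*} [Fintype E] [DecidableEq E]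

attribute [local instance] Matrix.linftyOpNormedAddCommGroup Matrix.linftyOpNormedRing
  Matrix.linftyOpNormedAlgebra

lemma norm_entry_le (B : Matrix E E ℂ) (e f : E) : ‖B e f‖ ≤ ‖B‖ := by
  have h1 : ‖B e f‖₊ ≤ ∑ g, ‖B e g‖₊ :=
    Finset.single_le_sum (f := fun g => ‖B e g‖₊) (fun g _ => zero_le) (Finset.mem_univ f)
  have h2 : (∑ g, ‖B e g‖₊) ≤ Finset.univ.sup fun i => ∑ j, ‖B i j‖₊ :=
    Finset.le_sup (f := fun i => ∑ j, ‖B i j‖₊) (Finset.mem_univ e)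
  rw [Matrix.linfty_opNorm_def]
  exact_mod_cast h1.trans h2

lemma pow_norm_tendsto_zero (A : Matrix E E ℂ) (hρ : spectralRadius ℂ A < 1) :
    Filter.Tendsto (fun n => ‖A ^ n‖) Filter.atTop (nhds 0) := by
  obtain ⟨r, hr1, hr2⟩ := exists_between hρ
  have hrtop : r ≠ ⊤ := (hr2.trans_le le_top).ne
  set s : NNReal := r.toNNReal with hs
  have hrs : r = (s : ENNReal) := (ENNReal.coe_toNNReal hrtop).symm
  have hs1 : (s : ℝ) < 1 := by
    have : (s : ENNReal) < 1 := hrs ▸ hr2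
    exact_mod_cast this
  have hev : ∀ᶠ n : ℕ in Filter.atTop, (‖A ^ n‖₊ : ENNReal) ^ (1 / (n : ℝ)) < r :=
    (spectrum.pow_nnnorm_pow_one_div_tendsto_nhds_spectralRadius A).eventually_lt_const hr1
  have hbound : ∀ᶠ n : ℕ in Filter.atTop, ‖A ^ n‖ ≤ (s : ℝ) ^ n := by
    filter_upwards [hev, Filter.eventually_ge_atTop 1] with n h1 h2
    have hn0 : (n : ℝ) ≠ 0 := Nat.cast_ne_zero.mpr (by omega)
    have key : (‖A ^ n‖₊ : ENNReal) ≤ r ^ n := by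
      calc (‖A ^ n‖₊ : ENNReal) = ((‖A ^ n‖₊ : ENNReal) ^ (1 / (n : ℝ))) ^ (n : ℝ) := by
            rw [← ENNReal.rpow_mul, one_div_mul_cancel hn0, ENNReal.rpow_one]
        _ ≤ r ^ (n : ℝ) := ENNReal.rpow_le_rpow h1.le (by positivity)
        _ = r ^ n := ENNReal.rpow_natCast r n
    rw [hrs, ← ENNReal.coe_pow, ENNReal.coe_le_coe] at key
    exact_mod_cast key
  have hgeo : Filter.Tendsto (fun n : ℕ => (s : ℝ) ^ n) Filter.atTop (nhds 0) :=
    tendsto_pow_atTop_nhds_zero_of_lt_one s.coe_nonneg hs1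
  exact squeeze_zero' (by filter_upwards with n; exact norm_nonneg _) hbound hgeo

lemma entry_tendsto_zero (A : Matrix E E ℂ) (hρ : spectralRadius ℂ A < 1) (e f : E) :
    Filter.Tendsto (fun n => ‖(A ^ n) e f‖) Filter.atTop (nhds 0) :=
  squeeze_zero' (by filter_upwards with n; exact norm_nonneg _)
    (by filter_upwards with n; exact norm_entry_le _ e f) (pow_norm_tendsto_zero A hρ)

end MatrixPart

theorem stmt_13 {E : Type*} [Fintype E] [DecidableEq E] (c β : E → E → ℝ)
    (hc : ∀ e f, 0 ≤ c e f) (hβ : ∀ e f, 0 ≤ β e f)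
    (M : Matrix E E ℝ) (hM : ∀ e f, M e f = c e f * Real.tanh (β e f))
    (hρ : spectralRadius ℂ (M.map (Complex.ofReal)) < 1) :
    BPmap0 c β 0 = 0 ∧
    (∀ z : E → ℝ, BPmap0 c β z = z → z = 0) ∧
    (∀ z₀ : E → ℝ,
      Filter.Tendsto (fun s => (BPmap0 c β)^[s] z₀) Filter.atTop (nhds 0)) := by
  have hF0 : BPmap0 c β 0 = 0 := by
    funext e; simp [BPmap0, F_zero]
  have htend : ∀ z₀ : E → ℝ,
      Filter.Tendsto (fun s => (BPmap0 c β)^[s] z₀) Filter.atTop (nhds 0) := by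
    intro z₀
    set Φ := BPmap0 c β with hΦ
    set A := M.map (Complex.ofReal) with hA
    have hApow : ∀ s : ℕ, A ^ s = (M ^ s).map Complex.ofReal := by
      intro s
      have h := map_pow (Complex.ofRealHom.mapMatrix) M s
      simp only [RingHom.mapMatrix_apply] at h
      rw [hA]
      exact h.symm
    have hMnn : ∀ e f, 0 ≤ M e f := fun e f => by
      rw [hM]; exact mul_nonneg (hc e f) (tanh_nonneg (hβ e f))
    have hstep : ∀ (w : E → ℝ) (e : E), |Φ w e| ≤ ∑ f, M e f * |w f| := by
      intro w e
      calc |Φ w e| ≤ ∑ f, |c e f * F (β e f) (w f)| := Finset.abs_sum_le_sum_abs _ _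
        _ ≤ ∑ f, M e f * |w f| := by
            apply Finset.sum_le_sum; intro f _
            rw [abs_mul, abs_of_nonneg (hc e f), hM, mul_assoc]
            exact mul_le_mul_of_nonneg_left (abs_F_le (hβ e f) (w f)) (hc e f)
    have hiter : ∀ (s : ℕ) (e : E), |Φ^[s] z₀ e| ≤ ∑ f, (M ^ s) e f * |z₀ f| := by
      intro s
      induction s with
      | zero => intro e; simp [Matrix.one_apply]
      | succ s ih =>
        intro e
        rw [Function.iterate_succ_apply']
        calc |Φ (Φ^[s] z₀) e| ≤ ∑ f, M e f * |Φ^[s] z₀ f| := hstep _ e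
          _ ≤ ∑ f, M e f * (∑ g, (M ^ s) f g * |z₀ g|) := by
              apply Finset.sum_le_sum; intro f _
              exact mul_le_mul_of_nonneg_left (ih f) (hMnn e f)
          _ = ∑ g, (M ^ (s + 1)) e g * |z₀ g| := by
              rw [pow_succ']
              simp_rw [Matrix.mul_apply, Finset.mul_sum, Finset.sum_mul]
              rw [Finset.sum_comm]
              apply Finset.sum_congr rfl; intro g _
              apply Finset.sum_congr rfl; intro f _
              ring
    have hent : ∀ e f : E, Filter.Tendsto (fun s => (M ^ s) e f) Filter.atTop (nhds 0) := by
      intro e f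
      have h := entry_tendsto_zero A hρ e f
      refine squeeze_zero_norm (fun s => le_of_eq ?_) h
      rw [hApow s]
      simp [Matrix.map_apply]
    rw [tendsto_pi_nhds]
    intro e
    simp only [Pi.zero_apply]
    apply squeeze_zero_norm (fun s => hiter s e)
    have h := tendsto_finset_sum Finset.univ
      (fun f (_ : f ∈ Finset.univ) => (hent e f).mul_const |z₀ f|)
    simpa using h
  refine ⟨hF0, ?_, htend⟩
  intro z hz
  have hconst : (fun s => (BPmap0 c β)^[s] z) = fun _ => z := by
    funext s; exact Function.iterate_fixed hz s
  have h := htend z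
  rw [hconst] at h
  exact tendsto_nhds_unique tendsto_const_nhds h
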